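/- Let F be a field and σ a ring automorphism of F[y]. If a and b are nonzero σ-special polynomials (i.e. a divides σ^k(a) for some nonzero integer k, and similarly for b), then the product a·b is σ-special. -/

import Mathlib

open Polynomial

lemma ringAut_zpow_apply {R : Type*} [CommRing R] (σ : RingAut R) (i j : ℤ) (x : R) :
    (σ ^ i) ((σ ^ j) x) = (σ ^ (i + j)) x := by
  rw [zpow_add]; rfl

lemma assoc_special {F : Type*} [Field F] (σ : RingAut (Polynomial F)) (a : Polynomial F)
    (k : ℤ) (h : a ∣ (σ ^ k) a) : Associated a ((σ ^ k) a) := by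
  have hstep : ∀ n : ℕ, (σ ^ (-((n : ℤ) + 1) * k)) a ∣ (σ ^ (-(n : ℤ) * k)) a := by
    intro n
    have h2 := map_dvd (σ ^ (-((n : ℤ) + 1) * k)) h
    rwa [ringAut_zpow_apply, show -((n : ℤ) + 1) * k + k = -(n : ℤ) * k by ring] at h2
  have mono : Monotone (fun n : ℕ => Ideal.span {(σ ^ (-(n : ℤ) * k)) a}) := by
    apply monotone_nat_of_le_succ
    intro n
    rw [Ideal.span_singleton_le_span_singleton]
    have := hstep n
    push_cast
    convert this using 4 <;> push_cast <;> ring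
  obtain ⟨n, hn⟩ := monotone_stabilizes_iff_noetherian.mpr inferInstance
    (⟨fun n : ℕ => Ideal.span {(σ ^ (-(n : ℤ) * k)) a}, mono⟩ : ℕ →o Ideal (Polynomial F))
  have heq := hn (n + 1) (Nat.le_succ n)
  simp only [OrderHom.coe_mk] at heq
  rw [Ideal.span_singleton_eq_span_singleton] at heq
  have hassoc := heq.map (σ ^ (((n : ℤ) + 1) * k))
  rw [ringAut_zpow_apply, ringAut_zpow_apply] at hassoc
  have e1 : ((n : ℤ) + 1) * k + -(n : ℤ) * k = k := by ring
  have e2 : ((n : ℤ) + 1) * k + -((n : ℕ) + 1 : ℕ) * k = 0 := by push_cast; ring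
  rw [e1, e2] at hassoc
  simpa using hassoc.symm

lemma assoc_special_mul {F : Type*} [Field F] (σ : RingAut (Polynomial F)) (a : Polynomial F)
    (k : ℤ) (h : a ∣ (σ ^ k) a) : ∀ j : ℤ, Associated a ((σ ^ (j * k)) a) := by
  have key := assoc_special σ a k h
  intro j
  induction j using Int.induction_on with
  | zero => simpa using Associated.refl a
  | succ i ih =>
      have h2 := key.map (σ ^ ((i : ℤ) * k))
      rw [ringAut_zpow_apply] at h2
      rw [show ((i : ℤ) + 1) * k = (i : ℤ) * k + k by ring]
      exact ih.trans h2
  | pred i ih =>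
      have h2 := key.map (σ ^ ((-(i : ℤ) - 1) * k))
      rw [ringAut_zpow_apply, show (-(i : ℤ) - 1) * k + k = -(i : ℤ) * k by ring] at h2
      rw [show (-(i : ℤ) - 1) * k = (-(i : ℤ) - 1) * k by ring]
      exact ih.trans h2.symm

/-- The product of two nonzero σ-special polynomials is σ-special. -/
theorem sigma_special_mul (F : Type*) [Field F]
    (σ : RingAut (Polynomial F)) (a b : Polynomial F)
    (ha0 : a ≠ 0) (hb0 : b ≠ 0)
    (ha : ∃ ℓ : ℤ, ℓ ≠ 0 ∧ a ∣ (σ ^ ℓ) a)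
    (hb : ∃ ℓ : ℤ, ℓ ≠ 0 ∧ b ∣ (σ ^ ℓ) b) :
    ∃ ℓ : ℤ, ℓ ≠ 0 ∧ (a * b) ∣ (σ ^ ℓ) (a * b) := by
  obtain ⟨k, hk, hak⟩ := ha
  obtain ⟨m, hm, hbm⟩ := hb
  refine ⟨k * m, mul_ne_zero hk hm, ?_⟩
  have hA : a ∣ (σ ^ (k * m)) a := by
    have := (assoc_special_mul σ a k hak m).dvd
    rwa [mul_comm m k] at this
  have hB : b ∣ (σ ^ (k * m)) b := (assoc_special_mul σ b m hbm k).dvd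
  rw [map_mul]
  exact mul_dvd_mul hA hB
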